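/- Let (w_n) and (u_n) be sequences such that for every n ≥ 1 and every partition n = n_1 + ⋯ + n_k into positive integers, w_n ≤ u_{n_1} + ⋯ + u_{n_k}. Then there exists a subadditive sequence (v_n) with w_n ≤ v_n ≤ u_n for all n ≥ 1. -/
import Mathlib


theorem sandwich_subadditive (u w : ℕ → ℝ)
    (h : ∀ n, 1 ≤ n → ∀ l : List ℕ, (∀ i ∈ l, 1 ≤ i) → l.sum = n → w n ≤ (l.map u).sum) :
    ∃ v : ℕ → ℝ, (∀ m n, 1 ≤ m → 1 ≤ n → v (m + n) ≤ v m + v n) ∧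
      ∀ n, 1 ≤ n → w n ≤ v n ∧ v n ≤ u n := by
  set S : ℕ → Set ℝ := fun n =>
    {x | ∃ l : List ℕ, (∀ i ∈ l, 1 ≤ i) ∧ l.sum = n ∧ x = (l.map u).sum} with hS
  have hne : ∀ n, 1 ≤ n → ((S n).Nonempty) := by
    intro n hn
    exact ⟨u n, [n], by simpa using hn, by simp, by simp⟩
  have hbdd : ∀ n, 1 ≤ n → BddBelow (S n) := by
    intro n hn
    refine ⟨w n, ?_⟩
    rintro x ⟨l, hl, hsum, rfl⟩
    exact h n hn l hl hsum
  set v : ℕ → ℝ := fun n => sInf (S n) with hv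
  have hmem : ∀ m n, 1 ≤ m → 1 ≤ n → ∀ a ∈ S m, ∀ b ∈ S n, a + b ∈ S (m + n) := by
    rintro m n hm hn a ⟨la, hla, hsa, rfl⟩ b ⟨lb, hlb, hsb, rfl⟩
    refine ⟨la ++ lb, ?_, by simp [hsa, hsb], by simp⟩
    intro i hi
    rcases List.mem_append.mp hi with h' | h'
    · exact hla i h'
    · exact hlb i h'
  refine ⟨v, ?_, ?_⟩
  · intro m n hm hn
    have key : ∀ a ∈ S m, ∀ b ∈ S n, v (m + n) ≤ a + b := by
      intro a ha b hb
      exact csInf_le (hbdd _ (by omega)) (hmem m n hm hn a ha b hb)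
    have h1 : ∀ a ∈ S m, v (m + n) - a ≤ v n := by
      intro a ha
      apply le_csInf (hne n hn)
      intro b hb
      linarith [key a ha b hb]
    have h2 : v (m + n) - v n ≤ v m := by
      apply le_csInf (hne m hm)
      intro a ha
      linarith [h1 a ha]
    linarith
  · intro n hn
    constructor
    · apply le_csInf (hne n hn)
      rintro x ⟨l, hl, hsum, rfl⟩
      exact h n hn l hl hsum
    · exact csInf_le (hbdd n hn) ⟨[n], by simpa using hn, by simp, by simp⟩
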